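/- arXiv:1806.07544 — 13 statements merged into one kernel-verified Lean document; each statement's English description precedes it below -/
import Mathlib

section
/- If (w₁, w₂, w₃) are differentiable complex-valued functions on an open set satisfying the Darboux–Halphen system w₁' = w₂w₃ − w₁w₂ − w₁w₃, w₂' = w₃w₁ − w₂w₃ − w₂w₁, w₃' = w₁w₂ − w₃w₁ − w₃w₂, then y = −2(w₁ + w₂ + w₃) satisfies Chazy's equation y''' − 2yy'' + 3(y')² = 0. -/
open Complex

/-- If `(w₁, w₂, w₃)` satisfy the Darboux–Halphen system on an open set,
then `y = -2(w₁ + w₂ + w₃)` satisfies Chazy's equation `y''' - 2 y y'' + 3 (y')² = 0`. -/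
theorem chazy_of_darboux_halphen (s : Set ℂ) (hs : IsOpen s)
    (w₁ w₂ w₃ y : ℂ → ℂ)
    (h₁ : ∀ x ∈ s, HasDerivAt w₁ (w₂ x * w₃ x - w₁ x * w₂ x - w₁ x * w₃ x) x)
    (h₂ : ∀ x ∈ s, HasDerivAt w₂ (w₃ x * w₁ x - w₂ x * w₃ x - w₂ x * w₁ x) x)
    (h₃ : ∀ x ∈ s, HasDerivAt w₃ (w₁ x * w₂ x - w₃ x * w₁ x - w₃ x * w₂ x) x)
    (hy : ∀ x, y x = -2 * (w₁ x + w₂ x + w₃ x)) :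
    ∀ x ∈ s,
      deriv (deriv (deriv y)) x - 2 * y x * deriv (deriv y) x + 3 * (deriv y x) ^ 2 = 0 := by
  set g1 : ℂ → ℂ := fun x => 2 * (w₁ x * w₂ x + w₂ x * w₃ x + w₃ x * w₁ x) with hg1
  set g2 : ℂ → ℂ := fun x => -12 * (w₁ x * w₂ x * w₃ x) with hg2
  set g3 : ℂ → ℂ := fun x =>
    -12 * ((w₂ x * w₃ x - w₁ x * w₂ x - w₁ x * w₃ x) * w₂ x * w₃ x
      + w₁ x * (w₃ x * w₁ x - w₂ x * w₃ x - w₂ x * w₁ x) * w₃ x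
      + w₁ x * w₂ x * (w₁ x * w₂ x - w₃ x * w₁ x - w₃ x * w₂ x)) with hg3
  have hyf : y = fun x => -2 * (w₁ x + w₂ x + w₃ x) := funext hy
  have hdy : ∀ x ∈ s, HasDerivAt y (g1 x) x := by
    intro x hx
    rw [hyf]
    have := (((h₁ x hx).add (h₂ x hx)).add (h₃ x hx)).const_mul (-2 : ℂ)
    refine this.congr_deriv ?_
    simp only [hg1]; ring
  have hdg1 : ∀ x ∈ s, HasDerivAt g1 (g2 x) x := by
    intro x hx
    have := ((((h₁ x hx).mul (h₂ x hx)).add ((h₂ x hx).mul (h₃ x hx))).add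
      ((h₃ x hx).mul (h₁ x hx))).const_mul (2 : ℂ)
    refine this.congr_deriv ?_
    simp only [hg2]; ring
  have hdg2 : ∀ x ∈ s, HasDerivAt g2 (g3 x) x := by
    intro x hx
    have := (((h₁ x hx).mul (h₂ x hx)).mul (h₃ x hx)).const_mul (-12 : ℂ)
    refine this.congr_deriv ?_
    simp only [hg3, Pi.mul_apply]; ring
  have hdy1 : ∀ x ∈ s, deriv y x = g1 x := fun x hx => (hdy x hx).deriv
  have hdy2 : ∀ x ∈ s, deriv (deriv y) x = g2 x := by
    intro x hx
    have heq : deriv y =ᶠ[nhds x] g1 :=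
      Filter.eventually_of_mem (hs.mem_nhds hx) hdy1
    rw [heq.deriv_eq, (hdg1 x hx).deriv]
  have hdy3 : ∀ x ∈ s, deriv (deriv (deriv y)) x = g3 x := by
    intro x hx
    have heq : deriv (deriv y) =ᶠ[nhds x] g2 :=
      Filter.eventually_of_mem (hs.mem_nhds hx) hdy2
    rw [heq.deriv_eq, (hdg2 x hx).deriv]
  intro x hx
  rw [hdy3 x hx, hdy2 x hx, hdy1 x hx, hy x]
  simp only [hg1, hg2, hg3]
  ring
end

section
/- If (w₁, w₂, w₃) satisfy the Darboux–Halphen system, then y = −4w₁ − w₂ − w₃ satisfies Chazy's equation y''' − 2yy'' + 3(y')² = 0 (and likewise for the cyclic permutations −w₁ − 4w₂ − w₃ and −w₁ − w₂ − 4w₃). -/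
open Complex

namespace DHaux

variable (w₁ w₂ w₃ : ℂ → ℂ)

/-- First Darboux–Halphen derivative expression. -/
def d1 : ℂ → ℂ := fun x => w₂ x * w₃ x - w₁ x * w₂ x - w₁ x * w₃ x
def d2 : ℂ → ℂ := d1 w₂ w₃ w₁
def d3 : ℂ → ℂ := d1 w₃ w₁ w₂

/-- Second derivative expression. -/
def e1 : ℂ → ℂ := fun x =>
  (d2 w₁ w₂ w₃ x * w₃ x + w₂ x * d3 w₁ w₂ w₃ x)
  - (d1 w₁ w₂ w₃ x * w₂ x + w₁ x * d2 w₁ w₂ w₃ x)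
  - (d1 w₁ w₂ w₃ x * w₃ x + w₁ x * d3 w₁ w₂ w₃ x)
def e2 : ℂ → ℂ := e1 w₂ w₃ w₁
def e3 : ℂ → ℂ := e1 w₃ w₁ w₂

/-- Third derivative expression. -/
def f1 : ℂ → ℂ := fun x =>
  ((e2 w₁ w₂ w₃ x * w₃ x + d2 w₁ w₂ w₃ x * d3 w₁ w₂ w₃ x)
    + (d2 w₁ w₂ w₃ x * d3 w₁ w₂ w₃ x + w₂ x * e3 w₁ w₂ w₃ x))
  - ((e1 w₁ w₂ w₃ x * w₂ x + d1 w₁ w₂ w₃ x * d2 w₁ w₂ w₃ x)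
    + (d1 w₁ w₂ w₃ x * d2 w₁ w₂ w₃ x + w₁ x * e2 w₁ w₂ w₃ x))
  - ((e1 w₁ w₂ w₃ x * w₃ x + d1 w₁ w₂ w₃ x * d3 w₁ w₂ w₃ x)
    + (d1 w₁ w₂ w₃ x * d3 w₁ w₂ w₃ x + w₁ x * e3 w₁ w₂ w₃ x))
def f2 : ℂ → ℂ := f1 w₂ w₃ w₁
def f3 : ℂ → ℂ := f1 w₃ w₁ w₂

variable {w₁ w₂ w₃} {s : Set ℂ}

lemma hasDerivAt_d1
    (h₁ : ∀ x ∈ s, HasDerivAt w₁ (d1 w₁ w₂ w₃ x) x)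
    (h₂ : ∀ x ∈ s, HasDerivAt w₂ (d2 w₁ w₂ w₃ x) x)
    (h₃ : ∀ x ∈ s, HasDerivAt w₃ (d3 w₁ w₂ w₃ x) x)
    {x : ℂ} (hx : x ∈ s) :
    HasDerivAt (d1 w₁ w₂ w₃) (e1 w₁ w₂ w₃ x) x := by
  exact (((h₂ x hx).mul (h₃ x hx)).sub ((h₁ x hx).mul (h₂ x hx))).sub
    ((h₁ x hx).mul (h₃ x hx))

lemma hasDerivAt_e1
    (h₁ : ∀ x ∈ s, HasDerivAt w₁ (d1 w₁ w₂ w₃ x) x)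
    (h₂ : ∀ x ∈ s, HasDerivAt w₂ (d2 w₁ w₂ w₃ x) x)
    (h₃ : ∀ x ∈ s, HasDerivAt w₃ (d3 w₁ w₂ w₃ x) x)
    (hd₁ : ∀ x ∈ s, HasDerivAt (d1 w₁ w₂ w₃) (e1 w₁ w₂ w₃ x) x)
    (hd₂ : ∀ x ∈ s, HasDerivAt (d2 w₁ w₂ w₃) (e2 w₁ w₂ w₃ x) x)
    (hd₃ : ∀ x ∈ s, HasDerivAt (d3 w₁ w₂ w₃) (e3 w₁ w₂ w₃ x) x)
    {x : ℂ} (hx : x ∈ s) :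
    HasDerivAt (e1 w₁ w₂ w₃) (f1 w₁ w₂ w₃ x) x := by
  exact ((((hd₂ x hx).mul (h₃ x hx)).add ((h₂ x hx).mul (hd₃ x hx))).sub
    (((hd₁ x hx).mul (h₂ x hx)).add ((h₁ x hx).mul (hd₂ x hx)))).sub
    (((hd₁ x hx).mul (h₃ x hx)).add ((h₁ x hx).mul (hd₃ x hx)))

/-- Key lemma: for `y = p w₁ + q w₂ + r w₃`, compute the first three derivatives
on the open set `s`. -/
lemma derivs (hs : IsOpen s) (p q r : ℂ) (y : ℂ → ℂ)
    (hy : ∀ x, y x = p * w₁ x + q * w₂ x + r * w₃ x)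
    (h₁ : ∀ x ∈ s, HasDerivAt w₁ (d1 w₁ w₂ w₃ x) x)
    (h₂ : ∀ x ∈ s, HasDerivAt w₂ (d2 w₁ w₂ w₃ x) x)
    (h₃ : ∀ x ∈ s, HasDerivAt w₃ (d3 w₁ w₂ w₃ x) x)
    {x : ℂ} (hx : x ∈ s) :
    deriv y x = p * d1 w₁ w₂ w₃ x + q * d2 w₁ w₂ w₃ x + r * d3 w₁ w₂ w₃ x ∧
    deriv (deriv y) x = p * e1 w₁ w₂ w₃ x + q * e2 w₁ w₂ w₃ x + r * e3 w₁ w₂ w₃ x ∧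
    deriv (deriv (deriv y)) x
      = p * f1 w₁ w₂ w₃ x + q * f2 w₁ w₂ w₃ x + r * f3 w₁ w₂ w₃ x := by
  have hd₂ : ∀ x ∈ s, HasDerivAt (d2 w₁ w₂ w₃) (e2 w₁ w₂ w₃ x) x := fun x hx =>
    hasDerivAt_d1 h₂ h₃ h₁ hx
  have hd₃ : ∀ x ∈ s, HasDerivAt (d3 w₁ w₂ w₃) (e3 w₁ w₂ w₃ x) x := fun x hx =>
    hasDerivAt_d1 h₃ h₁ h₂ hx
  have hd₁ : ∀ x ∈ s, HasDerivAt (d1 w₁ w₂ w₃) (e1 w₁ w₂ w₃ x) x := fun x hx =>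
    hasDerivAt_d1 h₁ h₂ h₃ hx
  have he₁ : ∀ x ∈ s, HasDerivAt (e1 w₁ w₂ w₃) (f1 w₁ w₂ w₃ x) x := fun x hx =>
    hasDerivAt_e1 h₁ h₂ h₃ hd₁ hd₂ hd₃ hx
  have he₂ : ∀ x ∈ s, HasDerivAt (e2 w₁ w₂ w₃) (f2 w₁ w₂ w₃ x) x := fun x hx =>
    hasDerivAt_e1 h₂ h₃ h₁ hd₂ hd₃ hd₁ hx
  have he₃ : ∀ x ∈ s, HasDerivAt (e3 w₁ w₂ w₃) (f3 w₁ w₂ w₃ x) x := fun x hx =>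
    hasDerivAt_e1 h₃ h₁ h₂ hd₃ hd₁ hd₂ hx
  -- first derivative of y on s
  have hY : ∀ x ∈ s, HasDerivAt y
      (p * d1 w₁ w₂ w₃ x + q * d2 w₁ w₂ w₃ x + r * d3 w₁ w₂ w₃ x) x := by
    intro x hx
    have h : HasDerivAt (fun x => p * w₁ x + q * w₂ x + r * w₃ x)
        (p * d1 w₁ w₂ w₃ x + q * d2 w₁ w₂ w₃ x + r * d3 w₁ w₂ w₃ x) x :=
      (((h₁ x hx).const_mul p).add ((h₂ x hx).const_mul q)).add ((h₃ x hx).const_mul r)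
    exact h.congr_of_eventuallyEq (Filter.Eventually.of_forall hy)
  set Y1 : ℂ → ℂ := fun x =>
    p * d1 w₁ w₂ w₃ x + q * d2 w₁ w₂ w₃ x + r * d3 w₁ w₂ w₃ x with hY1def
  set Y2 : ℂ → ℂ := fun x =>
    p * e1 w₁ w₂ w₃ x + q * e2 w₁ w₂ w₃ x + r * e3 w₁ w₂ w₃ x with hY2def
  have hdy : ∀ x ∈ s, deriv y x = Y1 x := fun x hx => (hY x hx).deriv
  have hY1 : ∀ x ∈ s, HasDerivAt Y1 (Y2 x) x := fun x hx =>
    (((hd₁ x hx).const_mul p).add ((hd₂ x hx).const_mul q)).add ((hd₃ x hx).const_mul r)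
  have hddy : ∀ x ∈ s, deriv (deriv y) x = Y2 x := by
    intro x hx
    have hev : deriv y =ᶠ[nhds x] Y1 :=
      Filter.eventuallyEq_of_mem (hs.mem_nhds hx) hdy
    rw [hev.deriv_eq]
    exact (hY1 x hx).deriv
  have hY2 : ∀ x ∈ s, HasDerivAt Y2
      (p * f1 w₁ w₂ w₃ x + q * f2 w₁ w₂ w₃ x + r * f3 w₁ w₂ w₃ x) x := fun x hx =>
    (((he₁ x hx).const_mul p).add ((he₂ x hx).const_mul q)).add ((he₃ x hx).const_mul r)
  refine ⟨hdy x hx, hddy x hx, ?_⟩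
  have hev : deriv (deriv y) =ᶠ[nhds x] Y2 :=
    Filter.eventuallyEq_of_mem (hs.mem_nhds hx) hddy
  rw [hev.deriv_eq]
  exact (hY2 x hx).deriv

end DHaux

/-- If `(w₁, w₂, w₃)` satisfy the Darboux–Halphen system, then
`y = -4w₁ - w₂ - w₃` satisfies Chazy's equation, and likewise for the cyclic
permutations `-w₁ - 4w₂ - w₃` and `-w₁ - w₂ - 4w₃`. -/
theorem chazy_of_darboux_halphen_combinations (s : Set ℂ) (hs : IsOpen s)
    (w₁ w₂ w₃ y₁ y₂ y₃ : ℂ → ℂ)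
    (h₁ : ∀ x ∈ s, HasDerivAt w₁ (w₂ x * w₃ x - w₁ x * w₂ x - w₁ x * w₃ x) x)
    (h₂ : ∀ x ∈ s, HasDerivAt w₂ (w₃ x * w₁ x - w₂ x * w₃ x - w₂ x * w₁ x) x)
    (h₃ : ∀ x ∈ s, HasDerivAt w₃ (w₁ x * w₂ x - w₃ x * w₁ x - w₃ x * w₂ x) x)
    (hy₁ : ∀ x, y₁ x = -4 * w₁ x - w₂ x - w₃ x)
    (hy₂ : ∀ x, y₂ x = -w₁ x - 4 * w₂ x - w₃ x)
    (hy₃ : ∀ x, y₃ x = -w₁ x - w₂ x - 4 * w₃ x) :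
    ∀ x ∈ s,
      (deriv (deriv (deriv y₁)) x - 2 * y₁ x * deriv (deriv y₁) x + 3 * (deriv y₁ x) ^ 2 = 0) ∧
      (deriv (deriv (deriv y₂)) x - 2 * y₂ x * deriv (deriv y₂) x + 3 * (deriv y₂ x) ^ 2 = 0) ∧
      (deriv (deriv (deriv y₃)) x - 2 * y₃ x * deriv (deriv y₃) x + 3 * (deriv y₃ x) ^ 2 = 0) := by
  intro x hx
  have h₁' : ∀ x ∈ s, HasDerivAt w₁ (DHaux.d1 w₁ w₂ w₃ x) x := h₁
  have h₂' : ∀ x ∈ s, HasDerivAt w₂ (DHaux.d2 w₁ w₂ w₃ x) x := h₂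
  have h₃' : ∀ x ∈ s, HasDerivAt w₃ (DHaux.d3 w₁ w₂ w₃ x) x := h₃
  have k₁ := DHaux.derivs hs (-4) (-1) (-1) y₁
    (fun x => by rw [hy₁ x]; ring) h₁' h₂' h₃' hx
  have k₂ := DHaux.derivs hs (-1) (-4) (-1) y₂
    (fun x => by rw [hy₂ x]; ring) h₁' h₂' h₃' hx
  have k₃ := DHaux.derivs hs (-1) (-1) (-4) y₃
    (fun x => by rw [hy₃ x]; ring) h₁' h₂' h₃' hx
  obtain ⟨a1, a2, a3⟩ := k₁
  obtain ⟨b1, b2, b3⟩ := k₂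
  obtain ⟨c1, c2, c3⟩ := k₃
  refine ⟨?_, ?_, ?_⟩
  · rw [a1, a2, a3, hy₁ x]
    simp only [DHaux.f1, DHaux.f2, DHaux.f3, DHaux.e1, DHaux.e2, DHaux.e3,
      DHaux.d1, DHaux.d2, DHaux.d3]
    ring
  · rw [b1, b2, b3, hy₂ x]
    simp only [DHaux.f1, DHaux.f2, DHaux.f3, DHaux.e1, DHaux.e2, DHaux.e3,
      DHaux.d1, DHaux.d2, DHaux.d3]
    ring
  · rw [c1, c2, c3, hy₃ x]
    simp only [DHaux.f1, DHaux.f2, DHaux.f3, DHaux.e1, DHaux.e2, DHaux.e3,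
      DHaux.d1, DHaux.d2, DHaux.d3]
    ring
end

section
/- If (p₁, p₂, p₃) are differentiable functions satisfying the system pᵢ' − (1/6)pᵢ² = (8/27)(p_{i+1} − pᵢ)(pᵢ − p_{i+2}) − (1/54)(p_{i+1} − p_{i+2})² (indices mod 3), then the triples (wⱼ) defined by inverting p₁ = −4w₁ − w₂ − w₃, p₂ = −w₁ − 4w₂ − w₃, p₃ = −w₁ − w₂ − 4w₃ satisfy the Darboux–Halphen system. -/
open Complex

/-- If `(p₁, p₂, p₃)` satisfy the first-order system
`pᵢ' - (1/6)pᵢ² = (8/27)(p_{i+1} - pᵢ)(pᵢ - p_{i+2}) - (1/54)(p_{i+1} - p_{i+2})²`,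
then the functions `(w₁, w₂, w₃)` obtained by inverting the linear map
`p₁ = -4w₁ - w₂ - w₃`, `p₂ = -w₁ - 4w₂ - w₃`, `p₃ = -w₁ - w₂ - 4w₃`
satisfy the Darboux–Halphen system. -/
theorem darboux_halphen_of_p_system (s : Set ℂ) (hs : IsOpen s)
    (p₁ p₂ p₃ w₁ w₂ w₃ : ℂ → ℂ)
    (h₁ : ∀ x ∈ s, HasDerivAt p₁
      ((1/6) * (p₁ x)^2 + (8/27) * (p₂ x - p₁ x) * (p₁ x - p₃ x)
        - (1/54) * (p₂ x - p₃ x)^2) x)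
    (h₂ : ∀ x ∈ s, HasDerivAt p₂
      ((1/6) * (p₂ x)^2 + (8/27) * (p₃ x - p₂ x) * (p₂ x - p₁ x)
        - (1/54) * (p₃ x - p₁ x)^2) x)
    (h₃ : ∀ x ∈ s, HasDerivAt p₃
      ((1/6) * (p₃ x)^2 + (8/27) * (p₁ x - p₃ x) * (p₃ x - p₂ x)
        - (1/54) * (p₁ x - p₂ x)^2) x)
    (hw₁ : ∀ x, p₁ x = -4 * w₁ x - w₂ x - w₃ x)
    (hw₂ : ∀ x, p₂ x = -w₁ x - 4 * w₂ x - w₃ x)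
    (hw₃ : ∀ x, p₃ x = -w₁ x - w₂ x - 4 * w₃ x) :
    ∀ x ∈ s,
      HasDerivAt w₁ (w₂ x * w₃ x - w₁ x * w₂ x - w₁ x * w₃ x) x ∧
      HasDerivAt w₂ (w₃ x * w₁ x - w₂ x * w₃ x - w₂ x * w₁ x) x ∧
      HasDerivAt w₃ (w₁ x * w₂ x - w₃ x * w₁ x - w₃ x * w₂ x) x := by
  have e₁ : w₁ = fun x => (-5 * p₁ x + p₂ x + p₃ x) / 18 := by
    funext x; linear_combination (5 * hw₁ x - hw₂ x - hw₃ x) / 18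
  have e₂ : w₂ = fun x => (-5 * p₂ x + p₁ x + p₃ x) / 18 := by
    funext x; linear_combination (-hw₁ x + 5 * hw₂ x - hw₃ x) / 18
  have e₃ : w₃ = fun x => (-5 * p₃ x + p₁ x + p₂ x) / 18 := by
    funext x; linear_combination (-hw₁ x - hw₂ x + 5 * hw₃ x) / 18
  intro x hx
  have d₁ := h₁ x hx
  have d₂ := h₂ x hx
  have d₃ := h₃ x hx
  have G₁ : HasDerivAt w₁ ((-5 * (1/6 * p₁ x ^ 2 + 8/27 * (p₂ x - p₁ x) * (p₁ x - p₃ x)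
      - 1/54 * (p₂ x - p₃ x) ^ 2) + (1/6 * p₂ x ^ 2 + 8/27 * (p₃ x - p₂ x) * (p₂ x - p₁ x)
      - 1/54 * (p₃ x - p₁ x) ^ 2) + (1/6 * p₃ x ^ 2 + 8/27 * (p₁ x - p₃ x) * (p₃ x - p₂ x)
      - 1/54 * (p₁ x - p₂ x) ^ 2)) / 18) x := by
    rw [e₁]; exact (((d₁.const_mul (-5)).add d₂).add d₃).div_const 18
  have G₂ : HasDerivAt w₂ ((-5 * (1/6 * p₂ x ^ 2 + 8/27 * (p₃ x - p₂ x) * (p₂ x - p₁ x)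
      - 1/54 * (p₃ x - p₁ x) ^ 2) + (1/6 * p₁ x ^ 2 + 8/27 * (p₂ x - p₁ x) * (p₁ x - p₃ x)
      - 1/54 * (p₂ x - p₃ x) ^ 2) + (1/6 * p₃ x ^ 2 + 8/27 * (p₁ x - p₃ x) * (p₃ x - p₂ x)
      - 1/54 * (p₁ x - p₂ x) ^ 2)) / 18) x := by
    rw [e₂]; exact (((d₂.const_mul (-5)).add d₁).add d₃).div_const 18
  have G₃ : HasDerivAt w₃ ((-5 * (1/6 * p₃ x ^ 2 + 8/27 * (p₁ x - p₃ x) * (p₃ x - p₂ x)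
      - 1/54 * (p₁ x - p₂ x) ^ 2) + (1/6 * p₁ x ^ 2 + 8/27 * (p₂ x - p₁ x) * (p₁ x - p₃ x)
      - 1/54 * (p₂ x - p₃ x) ^ 2) + (1/6 * p₂ x ^ 2 + 8/27 * (p₃ x - p₂ x) * (p₂ x - p₁ x)
      - 1/54 * (p₃ x - p₁ x) ^ 2)) / 18) x := by
    rw [e₃]; exact (((d₃.const_mul (-5)).add d₁).add d₂).div_const 18
  refine ⟨?_, ?_, ?_⟩
  · convert G₁ using 1; rw [hw₁ x, hw₂ x, hw₃ x]; ring
  · convert G₂ using 1; rw [hw₁ x, hw₂ x, hw₃ x]; ring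
  · convert G₃ using 1; rw [hw₁ x, hw₂ x, hw₃ x]; ring
end

section
/- Suppose (p₁, p₂, p₃) satisfy p₁' − (1/6)p₁² = (8/27)(p₂−p₁)(p₁−p₃) − (1/54)(p₂−p₃)² together with its two cyclic permutations. Define q₁ = (16/9)(p₂−p₁)(p₃−p₁) + (1/9)(p₂−p₃)² and r₁ = (1/27)(2p₁−p₂−p₃)(32(p₃−p₁)(p₂−p₁) − (p₂−p₃)²). Then (p₁, q₁, r₁) satisfies Ramanujan's differential equations: p₁' = (1/6)(p₁² − q₁), q₁' = (2/3)(p₁q₁ − r₁), r₁' = p₁r₁ − q₁². -/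
open Complex

/-- If `(p₁, p₂, p₃)` satisfy the cyclic first-order system, then with
`q₁ = (16/9)(p₂-p₁)(p₃-p₁) + (1/9)(p₂-p₃)²` and
`r₁ = (1/27)(2p₁-p₂-p₃)(32(p₃-p₁)(p₂-p₁) - (p₂-p₃)²)`,
the triple `(p₁, q₁, r₁)` satisfies Ramanujan's differential equations. -/
theorem ramanujan_of_p_system (s : Set ℂ) (hs : IsOpen s)
    (p₁ p₂ p₃ q₁ r₁ : ℂ → ℂ)
    (h₁ : ∀ x ∈ s, HasDerivAt p₁
      ((1/6) * (p₁ x)^2 + (8/27) * (p₂ x - p₁ x) * (p₁ x - p₃ x)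
        - (1/54) * (p₂ x - p₃ x)^2) x)
    (h₂ : ∀ x ∈ s, HasDerivAt p₂
      ((1/6) * (p₂ x)^2 + (8/27) * (p₃ x - p₂ x) * (p₂ x - p₁ x)
        - (1/54) * (p₃ x - p₁ x)^2) x)
    (h₃ : ∀ x ∈ s, HasDerivAt p₃
      ((1/6) * (p₃ x)^2 + (8/27) * (p₁ x - p₃ x) * (p₃ x - p₂ x)
        - (1/54) * (p₁ x - p₂ x)^2) x)
    (hq₁ : ∀ x, q₁ x = (16/9) * (p₂ x - p₁ x) * (p₃ x - p₁ x) + (1/9) * (p₂ x - p₃ x)^2)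
    (hr₁ : ∀ x, r₁ x = (1/27) * (2 * p₁ x - p₂ x - p₃ x) *
      (32 * (p₃ x - p₁ x) * (p₂ x - p₁ x) - (p₂ x - p₃ x)^2)) :
    ∀ x ∈ s,
      HasDerivAt p₁ ((1/6) * ((p₁ x)^2 - q₁ x)) x ∧
      HasDerivAt q₁ ((2/3) * (p₁ x * q₁ x - r₁ x)) x ∧
      HasDerivAt r₁ (p₁ x * r₁ x - (q₁ x)^2) x := by
  intro x hx
  have d₁ := h₁ x hx
  have d₂ := h₂ x hx
  have d₃ := h₃ x hx
  have hqf : q₁ = fun y => (16/9) * (p₂ y - p₁ y) * (p₃ y - p₁ y)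
      + (1/9) * (p₂ y - p₃ y)^2 := funext hq₁
  have hrf : r₁ = fun y => (1/27) * (2 * p₁ y - p₂ y - p₃ y) *
      (32 * (p₃ y - p₁ y) * (p₂ y - p₁ y) - (p₂ y - p₃ y)^2) := funext hr₁
  refine ⟨?_, ?_, ?_⟩
  · have heq : (1/6 : ℂ) * ((p₁ x)^2 - q₁ x)
        = (1/6) * (p₁ x)^2 + (8/27) * (p₂ x - p₁ x) * (p₁ x - p₃ x)
          - (1/54) * (p₂ x - p₃ x)^2 := by
      rw [hq₁]; ring
    rw [heq]; exact d₁
  · rw [hq₁ x, hr₁ x, hqf]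
    have h := (((d₂.sub d₁).const_mul ((16:ℂ)/9)).mul (d₃.sub d₁)).add
      (((d₂.sub d₃).pow 2).const_mul ((1:ℂ)/9))
    refine h.congr_deriv ?_
    simp only [Pi.sub_apply]
    ring
  · rw [hq₁ x, hr₁ x, hrf]
    have h := ((((d₁.const_mul (2:ℂ)).sub d₂).sub d₃).const_mul ((1:ℂ)/27)).mul
      ((((d₃.sub d₁).const_mul (32:ℂ)).mul (d₂.sub d₁)).sub ((d₂.sub d₃).pow 2))
    refine h.congr_deriv ?_
    simp only [Pi.sub_apply, Pi.mul_apply, Pi.pow_apply]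
    ring
end

section
/- If (p, q, r) satisfies Ramanujan's differential equations p' = (1/6)(p²−q), q' = (2/3)(pq−r), r' = pr − q², then y = p satisfies Chazy's equation y''' − 2yy'' + 3(y')² = 0. -/
open Complex

/-- If `(p, q, r)` satisfies Ramanujan's differential equations, then `y = p`
satisfies Chazy's equation `y''' - 2 y y'' + 3 (y')² = 0`. -/
theorem chazy_of_ramanujan (s : Set ℂ) (hs : IsOpen s) (p q r : ℂ → ℂ)
    (hp : ∀ x ∈ s, HasDerivAt p ((1/6) * ((p x)^2 - q x)) x)
    (hq : ∀ x ∈ s, HasDerivAt q ((2/3) * (p x * q x - r x)) x)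
    (hr : ∀ x ∈ s, HasDerivAt r (p x * r x - (q x)^2) x) :
    ∀ x ∈ s,
      deriv (deriv (deriv p)) x - 2 * p x * deriv (deriv p) x + 3 * (deriv p x) ^ 2 = 0 := by
  -- first derivative value
  have hp1 : ∀ x ∈ s, deriv p x = (1/6) * ((p x)^2 - q x) := fun x hx => (hp x hx).deriv
  -- second derivative
  have hPd : ∀ x ∈ s, HasDerivAt (fun y => (1/6) * ((p y)^2 - q y))
      ((1/18) * (p x)^3 - (1/6) * (p x * q x) + (1/9) * r x) x := by
    intro x hx
    have h := (((hp x hx).fun_pow 2).fun_sub (hq x hx)).const_mul (1/6 : ℂ)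
    refine h.congr_deriv ?_
    all_goals push_cast; ring
  have hdp : ∀ x ∈ s, HasDerivAt (deriv p)
      ((1/18) * (p x)^3 - (1/6) * (p x * q x) + (1/9) * r x) x := by
    intro x hx
    apply (hPd x hx).congr_of_eventuallyEq
    filter_upwards [hs.mem_nhds hx] with y hy using hp1 y hy
  have hp2 : ∀ x ∈ s, deriv (deriv p) x
      = (1/18) * (p x)^3 - (1/6) * (p x * q x) + (1/9) * r x :=
    fun x hx => (hdp x hx).deriv
  -- third derivative
  have hQd : ∀ x ∈ s, HasDerivAt (fun y => (1/18) * (p y)^3 - (1/6) * (p y * q y) + (1/9) * r y)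
      ((1/18) * (3 * (p x)^2 * ((1/6) * ((p x)^2 - q x)))
        - (1/6) * ((1/6) * ((p x)^2 - q x) * q x + p x * ((2/3) * (p x * q x - r x)))
        + (1/9) * (p x * r x - (q x)^2)) x := by
    intro x hx
    have h := ((((hp x hx).fun_pow 3).const_mul (1/18 : ℂ)).fun_sub
        (((hp x hx).fun_mul (hq x hx)).const_mul (1/6 : ℂ))).fun_add ((hr x hx).const_mul (1/9 : ℂ))
    refine h.congr_deriv ?_
    norm_num
  have hddp : ∀ x ∈ s, HasDerivAt (deriv (deriv p))
      ((1/18) * (3 * (p x)^2 * ((1/6) * ((p x)^2 - q x)))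
        - (1/6) * ((1/6) * ((p x)^2 - q x) * q x + p x * ((2/3) * (p x * q x - r x)))
        + (1/9) * (p x * r x - (q x)^2)) x := by
    intro x hx
    apply (hQd x hx).congr_of_eventuallyEq
    filter_upwards [hs.mem_nhds hx] with y hy using hp2 y hy
  intro x hx
  rw [(hddp x hx).deriv, hp2 x hx, hp1 x hx]
  ring
end

section
/- Let (P, Q, R) satisfy Ramanujan's differential equations P' = (1/6)(P²−Q), Q' = (2/3)(PQ−R), R' = PR − Q². Let T = R + √(R²−Q³) (any branch with T ≠ 0), v = (3/2)T^{1/3} + (3/2)Q/T^{1/3}, and u = ±√3 · (Q²/T^{2/3} + Q + T^{2/3})^{1/2}. Then the triple (p₂, q₂, r₂) = (P + (u+v)/2, (8/9)u(u+v) + (1/36)(v−u)², (1/54)(3u+v)(16u(u+v) − ((v−u)/2)²)) also satisfies Ramanujan's differential equations. -/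
open Complex Filter Topology

/-- If `f` is holomorphic on an open set, `h` continuous, and
`f * (f' - h f) = 0` pointwise, then `f' = h f` everywhere on the set. -/
private lemma cluster_deriv {s : Set ℂ} (hs : IsOpen s) {f h : ℂ → ℂ}
    (hf : DifferentiableOn ℂ f s) (hh : ContinuousOn h s)
    (hrel : ∀ x ∈ s, f x * (deriv f x - h x * f x) = 0) :
    ∀ x ∈ s, deriv f x = h x * f x := by
  have hdc : ContinuousOn (deriv f) s := ((hf.analyticOnNhd hs).deriv).continuousOn
  intro x hx
  by_cases hcl : x ∈ closure {y | y ∈ s ∧ f y ≠ 0}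
  · set A := {y | y ∈ s ∧ f y ≠ 0} with hA
    have hAs : A ⊆ s := fun y hy => hy.1
    have hzero : ∀ y ∈ A, deriv f y - h y * f y = 0 := fun y hy =>
      (mul_eq_zero.mp (hrel y hy.1)).resolve_left hy.2
    haveI hne : (𝓝[A] x).NeBot := mem_closure_iff_nhdsWithin_neBot.mp hcl
    have hg : ContinuousWithinAt (fun y => deriv f y - h y * f y) A x :=
      (((hdc x hx).sub ((hh x hx).mul (hf.continuousOn x hx))).mono hAs)
    have t2 : Filter.Tendsto (fun y => deriv f y - h y * f y) (𝓝[A] x) (𝓝 0) := by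
      refine Filter.Tendsto.congr' ?_ tendsto_const_nhds
      exact (eventually_nhdsWithin_of_forall fun y hy => (hzero y hy).symm)
    have := tendsto_nhds_unique hg t2
    exact sub_eq_zero.mp this
  · have hnotA : ∀ᶠ y in 𝓝 x, f y = 0 := by
      filter_upwards [isClosed_closure.isOpen_compl.mem_nhds hcl, hs.mem_nhds hx] with y hy1 hy2
      by_contra hfy
      exact hy1 (subset_closure ⟨hy2, hfy⟩)
    have hfx : f x = 0 := hnotA.self_of_nhds
    have hder : deriv f x = deriv (fun _ => (0 : ℂ)) x := Filter.EventuallyEq.deriv_eq hnotA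
    rw [hder, deriv_const, hfx, mul_zero]

/-- Given `(P, Q, R)` satisfying Ramanujan's differential equations, with
`T = R + √(R²-Q³)` holomorphic and nonvanishing, `T3` a holomorphic cube root of
`T`, `v = (3/2)T3 + (3/2)Q/T3`, and `u` a holomorphic square root of
`3(Q²/T3² + Q + T3²)`, the triple
`(P + (u+v)/2, (8/9)u(u+v) + (1/36)(v-u)², (1/54)(3u+v)(16u(u+v) - ((v-u)/2)²))`
also satisfies Ramanujan's differential equations. -/
theorem ramanujan_automorphism (s : Set ℂ) (hs : IsOpen s)
    (P Q R Sq T3 u v p₂ q₂ r₂ : ℂ → ℂ)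
    (hP : ∀ x ∈ s, HasDerivAt P ((1/6) * ((P x)^2 - Q x)) x)
    (hQ : ∀ x ∈ s, HasDerivAt Q ((2/3) * (P x * Q x - R x)) x)
    (hR : ∀ x ∈ s, HasDerivAt R (P x * R x - (Q x)^2) x)
    (hSq : DifferentiableOn ℂ Sq s)
    (hSq2 : ∀ x ∈ s, (Sq x)^2 = (R x)^2 - (Q x)^3)
    (hT3 : DifferentiableOn ℂ T3 s)
    (hT3c : ∀ x ∈ s, (T3 x)^3 = R x + Sq x)
    (hTne : ∀ x ∈ s, R x + Sq x ≠ 0)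
    (hu : DifferentiableOn ℂ u s)
    (hu2 : ∀ x ∈ s, (u x)^2 = 3 * ((Q x)^2 / (T3 x)^2 + Q x + (T3 x)^2))
    (hv : ∀ x, v x = (3/2) * T3 x + (3/2) * Q x / T3 x)
    (hp₂ : ∀ x, p₂ x = P x + (u x + v x) / 2)
    (hq₂ : ∀ x, q₂ x = (8/9) * u x * (u x + v x) + (1/36) * (v x - u x)^2)
    (hr₂ : ∀ x, r₂ x = (1/54) * (3 * u x + v x) *
      (16 * u x * (u x + v x) - ((v x - u x) / 2)^2)) :
    ∀ x ∈ s,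
      HasDerivAt p₂ ((1/6) * ((p₂ x)^2 - q₂ x)) x ∧
      HasDerivAt q₂ ((2/3) * (p₂ x * q₂ x - r₂ x)) x ∧
      HasDerivAt r₂ (p₂ x * r₂ x - (q₂ x)^2) x := by
  -- basic continuity facts
  have hPc : ContinuousOn P s := fun y hy =>
    ((hP y hy).differentiableAt.continuousAt).continuousWithinAt
  have hQc : ContinuousOn Q s := fun y hy =>
    ((hQ y hy).differentiableAt.continuousAt).continuousWithinAt
  have hT3ne : ∀ x ∈ s, T3 x ≠ 0 := by
    intro x hx hz
    exact hTne x hx (by rw [← hT3c x hx, hz]; ring)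
  -- derivative of Sq
  have hSqrel : ∀ x ∈ s, Sq x * (deriv Sq x - P x * Sq x) = 0 := by
    intro x hx
    have hd := (hSq.differentiableAt (hs.mem_nhds hx)).hasDerivAt
    have h1 : HasDerivAt (fun y => Sq y ^ 2) (2 * Sq x * deriv Sq x) x := by
      apply (hd.pow 2).congr_deriv
      push_cast; ring
    have h2 : HasDerivAt (fun y => R y ^ 2 - Q y ^ 3)
        (2 * R x * (P x * R x - (Q x)^2) - 3 * (Q x)^2 * ((2/3) * (P x * Q x - R x))) x := by
      apply (((hR x hx).pow 2).sub ((hQ x hx).pow 3)).congr_deriv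
      push_cast; ring
    have hEq : (fun y => Sq y ^ 2) =ᶠ[𝓝 x] (fun y => R y ^ 2 - Q y ^ 3) := by
      filter_upwards [hs.mem_nhds hx] with y hy using hSq2 y hy
    have key := (h1.congr_of_eventuallyEq hEq.symm).unique h2
    linear_combination (1/2) * key - P x * hSq2 x hx
  have hSqD : ∀ x ∈ s, HasDerivAt Sq (P x * Sq x) x := fun x hx =>
    (cluster_deriv hs hSq hPc hSqrel x hx) ▸ (hSq.differentiableAt (hs.mem_nhds hx)).hasDerivAt
  -- derivative of T3
  have hT3D : ∀ x ∈ s, HasDerivAt T3 ((P x * (T3 x)^3 - (Q x)^2) / (3 * (T3 x)^2)) x := by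
    intro x hx
    have hd := (hT3.differentiableAt (hs.mem_nhds hx)).hasDerivAt
    have h1 : HasDerivAt (fun y => T3 y ^ 3) (3 * (T3 x)^2 * deriv T3 x) x := by
      apply (hd.pow 3).congr_deriv
      push_cast; ring
    have h2 : HasDerivAt (fun y => R y + Sq y) ((P x * R x - (Q x)^2) + P x * Sq x) x :=
      (hR x hx).add (hSqD x hx)
    have hEq : (fun y => T3 y ^ 3) =ᶠ[𝓝 x] (fun y => R y + Sq y) := by
      filter_upwards [hs.mem_nhds hx] with y hy using hT3c y hy
    have key := (h1.congr_of_eventuallyEq hEq.symm).unique h2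
    have hden : (3 : ℂ) * (T3 x)^2 ≠ 0 := by
      exact mul_ne_zero three_ne_zero (pow_ne_zero _ (hT3ne x hx))
    have h3 : deriv T3 x = (P x * (T3 x)^3 - (Q x)^2) / (3 * (T3 x)^2) := by
      rw [eq_div_iff hden]
      linear_combination key - P x * hT3c x hx
    exact h3 ▸ hd
  -- algebraic relations
  have hb3 : ∀ x ∈ s, (Q x)^3 = (T3 x)^3 * (R x - Sq x) := fun x hx => by
    linear_combination hSq2 x hx - (R x - Sq x) * hT3c x hx
  have hRT : ∀ x ∈ s, 2 * R x * (T3 x)^3 = (T3 x)^6 + (Q x)^3 := fun x hx => by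
    linear_combination -(hb3 x hx) - (T3 x)^3 * hT3c x hx
  -- derivative of v
  have hvD : ∀ x ∈ s, HasDerivAt v (Q x + (1/3) * P x * v x - (2/9) * (v x)^2) x := by
    intro x hx
    have ha := hT3ne x hx
    have h := ((hT3D x hx).const_mul ((3:ℂ)/2)).add
      (((hQ x hx).const_mul ((3:ℂ)/2)).div (hT3D x hx) ha)
    have hfun : v = fun y => (3/2) * T3 y + (3/2) * Q y / T3 y := funext hv
    rw [hv x, hfun]
    apply h.congr_deriv
    have hw : T3 x * (T3 x)⁻¹ = 1 := mul_inv_cancel₀ ha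
    linear_combination ((-1/2 : ℂ) * (T3 x)⁻¹^4) * hRT x hx +
      (((-1/2 : ℂ) * T3 x^2) + ((-1/2 : ℂ) * T3 x^3 * (T3 x)⁻¹) + ((-1/2 : ℂ) * T3 x^4 * (T3 x)⁻¹^2) + ((-1/2 : ℂ) * T3 x^5 * (T3 x)⁻¹^3) + ((1 : ℂ) * R x * T3 x * (T3 x)⁻¹^2) + ((1 : ℂ) * R x * T3 x^2 * (T3 x)⁻¹^3) + ((1 : ℂ) * Q x) + ((1/2 : ℂ) * P x * T3 x) + ((1/2 : ℂ) * P x * T3 x^2 * (T3 x)⁻¹) + ((1/2 : ℂ) * P x * Q x * (T3 x)⁻¹) + ((-1/2 : ℂ) * P x * Q x * T3 x * (T3 x)⁻¹^2) + ((-1/2 : ℂ) * P x * Q x * T3 x^2 * (T3 x)⁻¹^3)) * hw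
  -- continuity of v
  have hvc : ContinuousOn v s := fun x hx =>
    ((hvD x hx).differentiableAt.continuousAt).continuousWithinAt
  -- the key quadratic relation between u and v
  have hux2 : ∀ x ∈ s, (u x)^2 = (4/3) * (v x)^2 - 3 * Q x := by
    intro x hx
    have ha := hT3ne x hx
    have hw : T3 x * (T3 x)⁻¹ = 1 := mul_inv_cancel₀ ha
    rw [hu2 x hx, hv x]
    linear_combination (-6 * Q x) * hw
  -- derivative of u
  have hurel : ∀ x ∈ s, u x * (deriv u x - ((1/3) * P x - (1/9) * v x) * u x) = 0 := by
    intro x hx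
    have ha := hT3ne x hx
    have hw : T3 x * (T3 x)⁻¹ = 1 := mul_inv_cancel₀ ha
    have hden2 : (T3 x)^2 ≠ 0 := pow_ne_zero 2 ha
    have hd := (hu.differentiableAt (hs.mem_nhds hx)).hasDerivAt
    have h1 : HasDerivAt (fun y => u y ^ 2) (2 * u x * deriv u x) x := by
      apply (hd.pow 2).congr_deriv
      push_cast; ring
    have h2 := ((((hQ x hx).pow 2).div ((hT3D x hx).pow 2) hden2).add (hQ x hx)).add
      ((hT3D x hx).pow 2) |>.const_mul (3:ℂ)
    have hEq : (fun y => u y ^ 2) =ᶠ[𝓝 x]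
        (fun y => 3 * ((Q y)^2 / (T3 y)^2 + Q y + (T3 y)^2)) := by
      filter_upwards [hs.mem_nhds hx] with y hy using hu2 y hy
    have key := (h1.congr_of_eventuallyEq hEq.symm).unique h2
    rw [hv x]
    simp only [Pi.pow_apply] at key
    linear_combination (1/2 : ℂ) * key +
      (-((1/3) * P x - (1/9) * ((3/2) * T3 x + (3/2) * Q x / T3 x))) * hu2 x hx +
      (((-1/2 : ℂ) * (T3 x)⁻¹^3) + ((-1 : ℂ) * Q x * (T3 x)⁻¹^5)) * hRT x hx +
      (((-1/2 : ℂ) * T3 x^3) + ((-1/2 : ℂ) * T3 x^4 * (T3 x)⁻¹) + ((-1/2 : ℂ) * T3 x^5 * (T3 x)⁻¹^2) + ((1 : ℂ) * R x) + ((1 : ℂ) * R x * T3 x * (T3 x)⁻¹) + ((1 : ℂ) * R x * T3 x^2 * (T3 x)⁻¹^2) + ((-1/2 : ℂ) * Q x * T3 x) + ((-1 : ℂ) * Q x * T3 x^2 * (T3 x)⁻¹) + ((-1 : ℂ) * Q x * T3 x^3 * (T3 x)⁻¹^2) + ((-1 : ℂ) * Q x * T3 x^4 * (T3 x)⁻¹^3)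 + ((-1 : ℂ) * Q x * T3 x^5 * (T3 x)⁻¹^4) + ((2 : ℂ) * Q x * R x * T3 x^2 * (T3 x)⁻¹^4) + ((-1/2 : ℂ) * Q x^2 * (T3 x)⁻¹) + ((1 : ℂ) * Q x^4 * (T3 x)⁻¹^5) + ((1 : ℂ) * P x * T3 x^2) + ((1 : ℂ) * P x * T3 x^3 * (T3 x)⁻¹) + ((1 : ℂ) * P x * Q x^2 * (T3 x)⁻¹^2) + ((1 : ℂ) * P x * Q x^2 * T3 x * (T3 x)⁻¹^3) + ((-1 : ℂ) * P x * Q x^2 * T3 x^2 * (T3 x)⁻¹^4) + ((-1 : ℂ) * P x * Q x^2 * T3 x^3 * (T3 x)⁻¹^5)) * hw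
  have hhc : ContinuousOn (fun y => (1/3) * P y - (1/9) * v y) s :=
    (continuousOn_const.mul hPc).sub (continuousOn_const.mul hvc)
  have huD : ∀ x ∈ s, HasDerivAt u (((1/3) * P x - (1/9) * v x) * u x) x := fun x hx =>
    (cluster_deriv hs hu hhc hurel x hx) ▸ (hu.differentiableAt (hs.mem_nhds hx)).hasDerivAt
  -- conclusion
  intro x hx
  have hu' := huD x hx
  have hv' := hvD x hx
  have hux := hux2 x hx
  have hfp : p₂ = fun y => P y + (u y + v y) / 2 := funext hp₂
  have hfq : q₂ = fun y => (8/9) * u y * (u y + v y) + (1/36) * (v y - u y)^2 := funext hq₂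
  have hfr : r₂ = fun y => (1/54) * (3 * u y + v y) *
      (16 * u y * (u y + v y) - ((v y - u y) / 2)^2) := funext hr₂
  refine ⟨?_, ?_, ?_⟩
  · rw [hp₂ x, hq₂ x, hfp]
    apply ((hP x hx).add ((hu'.add hv').div_const 2)).congr_deriv
    linear_combination (1/9 : ℂ) * hux
  · rw [hp₂ x, hq₂ x, hr₂ x, hfq]
    apply (((hu'.const_mul ((8:ℂ)/9)).mul (hu'.add hv')).add
      (((hv'.sub hu').pow 2).const_mul ((1:ℂ)/36))).congr_deriv
    push_cast
    simp only [Pi.add_apply, Pi.sub_apply, Pi.mul_apply, Pi.pow_apply]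
    linear_combination ((1/54 : ℂ) * v x + (5/18 : ℂ) * u x) * hux
  · rw [hp₂ x, hq₂ x, hr₂ x, hfr]
    apply ((((hu'.const_mul (3:ℂ)).add hv').const_mul ((1:ℂ)/54)).mul
      (((hu'.const_mul (16:ℂ)).mul (hu'.add hv')).sub
        (((hv'.sub hu').div_const 2).pow 2))).congr_deriv
    push_cast
    simp only [Pi.add_apply, Pi.sub_apply, Pi.mul_apply, Pi.pow_apply]
    linear_combination ((-1/216 : ℂ) * (v x)^2 + (7/36 : ℂ) * u x * v x + (29/72 : ℂ) * (u x)^2) * hux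
end

section
/- Let (P, Q, R) satisfy Ramanujan's differential equations and let T = R + √(R²−Q³). Then the triple p₀ = P + (1/2)T^{1/3} + (1/2)Q/T^{1/3}, q₀ = (3/2)Q + (5/4)T^{2/3} + (5/4)Q²/T^{2/3}, r₀ = (11/4)R + (21/8)QT^{1/3} + (21/8)Q²/T^{1/3} also satisfies Ramanujan's differential equations p₀' = (1/6)(p₀² − q₀), q₀' = (2/3)(p₀q₀ − r₀), r₀' = p₀r₀ − q₀². -/
open Complex

/-- Given `(P, Q, R)` satisfying Ramanujan's differential equations, with a
holomorphic nonvanishing `T = R + √(R²-Q³)` and holomorphic cube root `T3`, the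
triple `p₀ = P + (1/2)T3 + (1/2)Q/T3`, `q₀ = (3/2)Q + (5/4)T3² + (5/4)Q²/T3²`,
`r₀ = (11/4)R + (21/8)Q·T3 + (21/8)Q²/T3` also satisfies Ramanujan's
differential equations. -/
theorem ramanujan_sum_automorphism (s : Set ℂ) (hs : IsOpen s)
    (P Q R Sq T3 p₀ q₀ r₀ : ℂ → ℂ)
    (hP : ∀ x ∈ s, HasDerivAt P ((1/6) * ((P x)^2 - Q x)) x)
    (hQ : ∀ x ∈ s, HasDerivAt Q ((2/3) * (P x * Q x - R x)) x)
    (hR : ∀ x ∈ s, HasDerivAt R (P x * R x - (Q x)^2) x)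
    (hSq : DifferentiableOn ℂ Sq s)
    (hSq2 : ∀ x ∈ s, (Sq x)^2 = (R x)^2 - (Q x)^3)
    (hT3 : DifferentiableOn ℂ T3 s)
    (hT3c : ∀ x ∈ s, (T3 x)^3 = R x + Sq x)
    (hTne : ∀ x ∈ s, R x + Sq x ≠ 0)
    (hp₀ : ∀ x, p₀ x = P x + (1/2) * T3 x + (1/2) * Q x / T3 x)
    (hq₀ : ∀ x, q₀ x = (3/2) * Q x + (5/4) * (T3 x)^2 + (5/4) * (Q x)^2 / (T3 x)^2)
    (hr₀ : ∀ x, r₀ x = (11/4) * R x + (21/8) * Q x * T3 x + (21/8) * (Q x)^2 / T3 x) :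
    ∀ x ∈ s,
      HasDerivAt p₀ ((1/6) * ((p₀ x)^2 - q₀ x)) x ∧
      HasDerivAt q₀ ((2/3) * (p₀ x * q₀ x - r₀ x)) x ∧
      HasDerivAt r₀ (p₀ x * r₀ x - (q₀ x)^2) x := by
  -- Step 1: the square root satisfies Sq' = P · Sq
  have hSqKey : ∀ y ∈ s, Sq y * (deriv Sq y - P y * Sq y) = 0 := by
    intro y hy
    have h1 : HasDerivAt Sq (deriv Sq y) y :=
      (hSq.differentiableAt (hs.mem_nhds hy)).hasDerivAt
    have h2 : HasDerivAt (fun z => (Sq z)^2) (2 * Sq y ^ 1 * deriv Sq y) y := h1.pow 2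
    have h3 : HasDerivAt (fun z => (R z)^2 - (Q z)^3)
        (2 * R y ^ 1 * (P y * R y - (Q y)^2) - 3 * Q y ^ 2 * ((2/3) * (P y * Q y - R y))) y :=
      ((hR y hy).pow 2).sub ((hQ y hy).pow 3)
    have heq : (fun z => (Sq z)^2) =ᶠ[nhds y] (fun z => (R z)^2 - (Q z)^3) := by
      filter_upwards [hs.mem_nhds hy] with z hz using hSq2 z hz
    have h4 : 2 * Sq y ^ 1 * deriv Sq y
        = 2 * R y ^ 1 * (P y * R y - (Q y)^2) - 3 * Q y ^ 2 * ((2/3) * (P y * Q y - R y)) :=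
      h2.unique (h3.congr_of_eventuallyEq heq)
    have h5 := hSq2 y hy
    linear_combination (1/2) * h4 - P y * h5
  have hSq' : ∀ y ∈ s, HasDerivAt Sq (P y * Sq y) y := by
    intro y hy
    have hdiff : DifferentiableAt ℂ Sq y := hSq.differentiableAt (hs.mem_nhds hy)
    have h1 : HasDerivAt Sq (deriv Sq y) y := hdiff.hasDerivAt
    by_cases hSy : Sq y = 0
    · have hAn : AnalyticAt ℂ Sq y := hSq.analyticAt (hs.mem_nhds hy)
      rcases hAn.eventually_eq_zero_or_eventually_ne_zero with h0 | hne
      · have hd0 : HasDerivAt Sq 0 y :=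
          (hasDerivAt_const y (0:ℂ)).congr_of_eventuallyEq h0
        have : P y * Sq y = 0 := by rw [hSy, mul_zero]
        rwa [this]
      · -- isolated zero: use continuity of deriv Sq - P·Sq on a punctured nbhd
        have hsm : ∀ᶠ z in nhds y, z ∈ s := hs.mem_nhds hy
        have hg : (fun z => deriv Sq z - P z * Sq z) =ᶠ[nhdsWithin y {y}ᶜ] (fun _ => (0:ℂ)) := by
          filter_upwards [hne, hsm.filter_mono nhdsWithin_le_nhds] with z hz1 hz2
          rcases mul_eq_zero.mp (hSqKey z hz2) with h | h
          · exact absurd h hz1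
          · exact h
        have hderivAn : AnalyticOnNhd ℂ (deriv Sq) s := (hSq.analyticOnNhd hs).deriv
        have hc : ContinuousAt (fun z => deriv Sq z - P z * Sq z) y :=
          ((hderivAn y hy).continuousAt).sub
            (((hP y hy).differentiableAt.continuousAt).mul hdiff.continuousAt)
        have hlim1 : Filter.Tendsto (fun z => deriv Sq z - P z * Sq z) (nhdsWithin y {y}ᶜ)
            (nhds (deriv Sq y - P y * Sq y)) := hc.tendsto.mono_left nhdsWithin_le_nhds
        have hlim2 : Filter.Tendsto (fun z => deriv Sq z - P z * Sq z) (nhdsWithin y {y}ᶜ)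
            (nhds 0) := Filter.Tendsto.congr' hg.symm tendsto_const_nhds
        have h0 : deriv Sq y - P y * Sq y = 0 := tendsto_nhds_unique hlim1 hlim2
        have : deriv Sq y = P y * Sq y := by linear_combination h0
        rwa [this] at h1
    · rcases mul_eq_zero.mp (hSqKey y hy) with h | h
      · exact absurd h hSy
      · have : deriv Sq y = P y * Sq y := by linear_combination h
        rwa [this] at h1
  intro x hx
  have hu : T3 x ≠ 0 := by
    intro h
    apply hTne x hx
    rw [← hT3c x hx, h]
    norm_num
  -- Step 2: derivative of T3
  have hux : HasDerivAt T3 ((P x * (T3 x)^3 - (Q x)^2) / (3 * (T3 x)^2)) x := by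
    have hdiff : DifferentiableAt ℂ T3 x := hT3.differentiableAt (hs.mem_nhds hx)
    have h1 : HasDerivAt T3 (deriv T3 x) x := hdiff.hasDerivAt
    have h2 : HasDerivAt (fun z => (T3 z)^3) (3 * T3 x ^ 2 * deriv T3 x) x := h1.pow 3
    have h3 : HasDerivAt (fun z => R z + Sq z) ((P x * R x - (Q x)^2) + P x * Sq x) x :=
      (hR x hx).add (hSq' x hx)
    have heq : (fun z => (T3 z)^3) =ᶠ[nhds x] (fun z => R z + Sq z) := by
      filter_upwards [hs.mem_nhds hx] with z hz using hT3c z hz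
    have h4 : 3 * T3 x ^ 2 * deriv T3 x = (P x * R x - (Q x)^2) + P x * Sq x :=
      h2.unique (h3.congr_of_eventuallyEq heq)
    have h5 := hT3c x hx
    have hval : deriv T3 x = (P x * (T3 x)^3 - (Q x)^2) / (3 * (T3 x)^2) := by
      rw [eq_div_iff (mul_ne_zero three_ne_zero (pow_ne_zero 2 hu))]
      linear_combination h4 - P x * h5
    rwa [hval] at h1
  have h4 : T3 x * (T3 x)⁻¹ = 1 := mul_inv_cancel₀ hu
  -- key algebraic relation for T3
  have hkey : (T3 x)^6 - 2 * R x * (T3 x)^3 + (Q x)^3 = 0 := by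
    have h1 := hT3c x hx
    have h2 := hSq2 x hx
    linear_combination ((T3 x)^3 - R x + Sq x) * h1 + h2
  have hPx := hP x hx
  have hQx := hQ x hx
  have hRx := hR x hx
  -- explicit functions
  have hpf : p₀ =ᶠ[nhds x] (fun z => P z + (1/2) * T3 z + (1/2) * Q z / T3 z) :=
    Filter.Eventually.of_forall hp₀
  have hqf : q₀ =ᶠ[nhds x] (fun z => (3/2) * Q z + (5/4) * (T3 z)^2 + (5/4) * (Q z)^2 / (T3 z)^2) :=
    Filter.Eventually.of_forall hq₀
  have hrf : r₀ =ᶠ[nhds x] (fun z => (11/4) * R z + (21/8) * Q z * T3 z + (21/8) * (Q z)^2 / T3 z) :=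
    Filter.Eventually.of_forall hr₀
  refine ⟨?_, ?_, ?_⟩
  · have hd : HasDerivAt (fun z => P z + (1/2) * T3 z + (1/2) * Q z / T3 z)
        ((((1/6) * ((P x)^2 - Q x)) + (1/2) * ((P x * (T3 x)^3 - (Q x)^2) / (3 * (T3 x)^2))) + (((1/2) * ((2/3) * (P x * Q x - R x))) * T3 x - ((1/2) * Q x) * ((P x * (T3 x)^3 - (Q x)^2) / (3 * (T3 x)^2))) / (T3 x)^2) x :=
      (hPx.add (hux.const_mul (1/2))).add ((hQx.const_mul (1/2)).div hux hu)
    have hd' := hd.congr_of_eventuallyEq hpf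
    have hval : (((1/6) * ((P x)^2 - Q x)) + (1/2) * ((P x * (T3 x)^3 - (Q x)^2) / (3 * (T3 x)^2))) + (((1/2) * ((2/3) * (P x * Q x - R x))) * T3 x - ((1/2) * Q x) * ((P x * (T3 x)^3 - (Q x)^2) / (3 * (T3 x)^2))) / (T3 x)^2
        = (1/6) * ((p₀ x)^2 - q₀ x) := by
      rw [hp₀ x, hq₀ x]
      linear_combination ((1/6)*((T3 x)⁻¹)^4) * hkey + ((-1/6)*(T3 x)^2 + (-1/6)*(T3 x)^3*((T3 x)⁻¹) + (-1/6)*(T3 x)^4*((T3 x)⁻¹)^2 + (-1/6)*(T3 x)^5*((T3 x)⁻¹)^3 + (1/3)*(R x)*(T3 x)*((T3 x)⁻¹)^2 + (1/3)*(R x)*(T3 x)^2*((T3 x)⁻¹)^3 + (-1/12)*(Q x) + (1/6)*(P x)*(T3 x) + (1/6)*(P x)*(T3 x)^2*((T3 x)⁻¹) + (1/6)*(P x)*(Q x)*((T3 x)⁻¹) + (-1/6)*(P x)*(Q x)*(T3 x)*((T3 x)⁻¹)^2 + (-1/6)*(P x)*(Q x)*(T3 x)^2*((T3 x)⁻¹)^3)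 * h4
    rwa [hval] at hd'
  · have hd : HasDerivAt (fun z => (3/2) * Q z + (5/4) * (T3 z)^2 + (5/4) * (Q z)^2 / (T3 z)^2)
        (((3/2) * ((2/3) * (P x * Q x - R x)) + (5/4) * (2 * T3 x ^ 1 * ((P x * (T3 x)^3 - (Q x)^2) / (3 * (T3 x)^2)))) + (((5/4) * (2 * Q x ^ 1 * ((2/3) * (P x * Q x - R x)))) * (T3 x)^2 - ((5/4) * (Q x)^2) * (2 * T3 x ^ 1 * ((P x * (T3 x)^3 - (Q x)^2) / (3 * (T3 x)^2)))) / ((T3 x)^2)^2) x :=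
      ((hQx.const_mul (3/2)).add ((hux.pow 2).const_mul (5/4))).add
        (((hQx.pow 2).const_mul (5/4)).div (hux.pow 2) (pow_ne_zero 2 hu))
    have hd' := hd.congr_of_eventuallyEq hqf
    have hval : ((3/2) * ((2/3) * (P x * Q x - R x)) + (5/4) * (2 * T3 x ^ 1 * ((P x * (T3 x)^3 - (Q x)^2) / (3 * (T3 x)^2)))) + (((5/4) * (2 * Q x ^ 1 * ((2/3) * (P x * Q x - R x)))) * (T3 x)^2 - ((5/4) * (Q x)^2) * (2 * T3 x ^ 1 * ((P x * (T3 x)^3 - (Q x)^2) / (3 * (T3 x)^2)))) / ((T3 x)^2)^2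
        = (2/3) * (p₀ x * q₀ x - r₀ x) := by
      rw [hp₀ x, hq₀ x, hr₀ x]
      linear_combination ((-5/12)*(T3 x)^2*((T3 x)⁻¹)^5 + (5/6)*(Q x)*((T3 x)⁻¹)^5) * hkey + ((5/12)*(T3 x)^3 + (5/12)*(T3 x)^4*((T3 x)⁻¹) + (5/12)*(T3 x)^5*((T3 x)⁻¹)^2 + (5/12)*(T3 x)^6*((T3 x)⁻¹)^3 + (5/12)*(T3 x)^7*((T3 x)⁻¹)^4 + (-5/6)*(R x) + (-5/6)*(R x)*(T3 x)*((T3 x)⁻¹) + (-5/6)*(R x)*(T3 x)^2*((T3 x)⁻¹)^2 + (-5/6)*(R x)*(T3 x)^3*((T3 x)⁻¹)^3 + (-5/6)*(R x)*(T3 x)^4*((T3 x)⁻¹)^4 + (-5/4)*(Q x)*(T3 x) + (-5/6)*(Q x)*(T3 x)^2*((T3 x)⁻¹) + (-5/6)*(Q x)*(T3 x)^3*((T3 x)⁻¹)^2 + (-5/6)*(Q x)*(T3 x)^4*((T3 x)⁻¹)^3 + (-5/6)*(Q x)*(T3 x)^5*((T3 x)⁻¹)^4 + (5/3)*(Q x)*(R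 x)*(T3 x)^2*((T3 x)⁻¹)^4 + (-5/4)*(Q x)^2*((T3 x)⁻¹) + (5/12)*(Q x)^3*((T3 x)⁻¹)^3 + (5/12)*(Q x)^3*(T3 x)*((T3 x)⁻¹)^4 + (5/6)*(Q x)^4*((T3 x)⁻¹)^5 + (5/6)*(P x)*(T3 x)^2 + (5/6)*(P x)*(T3 x)^3*((T3 x)⁻¹) + (5/6)*(P x)*(Q x)^2*((T3 x)⁻¹)^2 + (5/6)*(P x)*(Q x)^2*(T3 x)*((T3 x)⁻¹)^3 + (-5/6)*(P x)*(Q x)^2*(T3 x)^2*((T3 x)⁻¹)^4 + (-5/6)*(P x)*(Q x)^2*(T3 x)^3*((T3 x)⁻¹)^5) * h4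
    rwa [hval] at hd'
  · have hd : HasDerivAt (fun z => (11/4) * R z + (21/8) * Q z * T3 z + (21/8) * (Q z)^2 / T3 z)
        (((11/4) * (P x * R x - (Q x)^2) + (((21/8) * ((2/3) * (P x * Q x - R x))) * T3 x + ((21/8) * Q x) * ((P x * (T3 x)^3 - (Q x)^2) / (3 * (T3 x)^2)))) + (((21/8) * (2 * Q x ^ 1 * ((2/3) * (P x * Q x - R x)))) * T3 x - ((21/8) * (Q x)^2) * ((P x * (T3 x)^3 - (Q x)^2) / (3 * (T3 x)^2))) / (T3 x)^2) x :=
      ((hRx.const_mul (11/4)).add ((hQx.const_mul (21/8)).mul hux)).add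
        (((hQx.pow 2).const_mul (21/8)).div hux hu)
    have hd' := hd.congr_of_eventuallyEq hrf
    have hval : ((11/4) * (P x * R x - (Q x)^2) + (((21/8) * ((2/3) * (P x * Q x - R x))) * T3 x + ((21/8) * Q x) * ((P x * (T3 x)^3 - (Q x)^2) / (3 * (T3 x)^2)))) + (((21/8) * (2 * Q x ^ 1 * ((2/3) * (P x * Q x - R x)))) * T3 x - ((21/8) * (Q x)^2) * ((P x * (T3 x)^3 - (Q x)^2) / (3 * (T3 x)^2))) / (T3 x)^2
        = p₀ x * r₀ x - (q₀ x)^2 := by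
      rw [hp₀ x, hq₀ x, hr₀ x]
      linear_combination ((25/16)*(T3 x)^2*((T3 x)⁻¹)^4 + (39/16)*(Q x)*((T3 x)⁻¹)^4) * hkey + ((-25/16)*(T3 x)^4 + (-25/16)*(T3 x)^5*((T3 x)⁻¹) + (-25/16)*(T3 x)^6*((T3 x)⁻¹)^2 + (-25/16)*(T3 x)^7*((T3 x)⁻¹)^3 + (25/8)*(R x)*(T3 x) + (25/8)*(R x)*(T3 x)^2*((T3 x)⁻¹) + (25/8)*(R x)*(T3 x)^3*((T3 x)⁻¹)^2 + (25/8)*(R x)*(T3 x)^4*((T3 x)⁻¹)^3 + (-39/16)*(Q x)*(T3 x)^2 + (-39/16)*(Q x)*(T3 x)^3*((T3 x)⁻¹) + (-39/16)*(Q x)*(T3 x)^4*((T3 x)⁻¹)^2 + (-39/16)*(Q x)*(T3 x)^5*((T3 x)⁻¹)^3 + (11/8)*(Q x)*(R x)*((T3 x)⁻¹) + (39/8)*(Q x)*(R x)*(T3 x)*((T3 x)⁻¹)^2 + (39/8)*(Q x)*(R x)*(T3 x)^2*((T3 x)⁻¹)^3 + (1/2)*(Q x)^2 + (25/8)*(Q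 x)^2*(T3 x)*((T3 x)⁻¹) + (-25/16)*(Q x)^3*((T3 x)⁻¹)^2 + (-25/16)*(Q x)^3*(T3 x)*((T3 x)⁻¹)^3 + (7/8)*(P x)*(Q x)*(T3 x) + (7/8)*(P x)*(Q x)*(T3 x)^2*((T3 x)⁻¹) + (21/8)*(P x)*(Q x)^2*((T3 x)⁻¹) + (-7/8)*(P x)*(Q x)^2*(T3 x)*((T3 x)⁻¹)^2 + (-7/8)*(P x)*(Q x)^2*(T3 x)^2*((T3 x)⁻¹)^3) * h4
    rwa [hval] at hd'
end

section
/- With T = R + √(R²−Q³), p₀ = P + (1/2)T^{1/3} + (1/2)Q/T^{1/3}, q₀ = (3/2)Q + (5/4)T^{2/3} + (5/4)Q²/T^{2/3}, r₀ = (11/4)R + (21/8)QT^{1/3} + (21/8)Q²/T^{1/3}, and t = r₀ + √(r₀² − q₀³), the inverse relations hold: P = p₀ + (1/2)t^{1/3} + (1/2)q₀/t^{1/3}, Q = (3/2)q₀ + (5/4)t^{2/3} + (5/4)q₀²/t^{2/3}, R = (11/4)r₀ + (21/8)q₀t^{1/3} + (21/8)q₀²/t^{1/3} (for appropriate choices of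 branch). -/
open Complex

private lemma aux_dual (P Q R u v g p₀ q₀ r₀ : ℂ)
    (hQ : Q = u * v) (hR : u^3 + v^3 = 2 * R)
    (hg : g^2 = -(u^2 + u*v + v^2))
    (hp : p₀ = P + (1/2)*u + (1/2)*v)
    (hq : q₀ = (3/2)*Q + (5/4)*u^2 + (5/4)*v^2)
    (hr : r₀ = (11/4)*R + (21/8)*Q*u + (21/8)*Q*v)
    (hne : g - (u+v)/2 ≠ 0) :
    ∃ sq t3 : ℂ, sq^2 = r₀^2 - q₀^3 ∧ t3^3 = r₀ + sq ∧ t3 ≠ 0 ∧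
      P = p₀ + (1/2) * t3 + (1/2) * q₀ / t3 ∧
      Q = (3/2) * q₀ + (5/4) * t3^2 + (5/4) * q₀^2 / t3^2 ∧
      R = (11/4) * r₀ + (21/8) * q₀ * t3 + (21/8) * q₀^2 / t3 := by
  set t3 : ℂ := g - (u+v)/2 with ht3def
  set s' : ℂ := -g - (u+v)/2 with hs'def
  have hss' : t3 * s' = q₀ := by
    rw [hq, hQ, ht3def, hs'def]; linear_combination (-1 : ℂ) * hg
  have hd : q₀ / t3 = s' := by
    rw [← hss', mul_div_cancel_left₀ _ hne]
  have hd2 : q₀^2 / t3^2 = s'^2 := by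
    rw [← div_pow, hd]
  have hd3 : q₀^2 / t3 = q₀ * s' := by
    rw [pow_two, mul_div_assoc, hd]
  have h3 : t3^3 + s'^3 = 2 * r₀ := by
    rw [hr, hQ, ht3def, hs'def]
    linear_combination (-3*(u+v)) * hg + (11/4 : ℂ) * hR
  refine ⟨t3^3 - r₀, t3, ?_, by ring, hne, ?_, ?_, ?_⟩
  · linear_combination t3^3 * h3 - (q₀^2 + q₀*(t3*s') + (t3*s')^2) * hss'
  · rw [mul_div_assoc, hd, hp, ht3def, hs'def]; ring
  · rw [mul_div_assoc, hd2, hq, hQ, ht3def, hs'def]; linear_combination (-5/2 : ℂ) * hg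
  · rw [mul_div_assoc, hd3, hr, hq, hQ, ht3def, hs'def]
    linear_combination (105/32 : ℂ) * hR

/-- Algebraic duality: with `T = R + √(R²-Q³)` nonzero, `T3` a cube root of `T`,
`p₀ = P + (1/2)T3 + (1/2)Q/T3`, `q₀ = (3/2)Q + (5/4)T3² + (5/4)Q²/T3²`,
`r₀ = (11/4)R + (21/8)Q·T3 + (21/8)Q²/T3`, and `t = r₀ + √(r₀² - q₀³)`, the
inverse relations `P = p₀ + (1/2)t^{1/3} + (1/2)q₀/t^{1/3}`,
`Q = (3/2)q₀ + (5/4)t^{2/3} + (5/4)q₀²/t^{2/3}`,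
`R = (11/4)r₀ + (21/8)q₀ t^{1/3} + (21/8)q₀²/t^{1/3}` hold for appropriate
branches. -/
theorem ramanujan_duality_algebraic (P Q R Sq T3 p₀ q₀ r₀ : ℂ)
    (hSq : Sq^2 = R^2 - Q^3)
    (hT3 : T3^3 = R + Sq)
    (hTne : R + Sq ≠ 0)
    (hp₀ : p₀ = P + (1/2) * T3 + (1/2) * Q / T3)
    (hq₀ : q₀ = (3/2) * Q + (5/4) * T3^2 + (5/4) * Q^2 / T3^2)
    (hr₀ : r₀ = (11/4) * R + (21/8) * Q * T3 + (21/8) * Q^2 / T3) :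
    ∃ sq t3 : ℂ, sq^2 = r₀^2 - q₀^3 ∧ t3^3 = r₀ + sq ∧ t3 ≠ 0 ∧
      P = p₀ + (1/2) * t3 + (1/2) * q₀ / t3 ∧
      Q = (3/2) * q₀ + (5/4) * t3^2 + (5/4) * q₀^2 / t3^2 ∧
      R = (11/4) * r₀ + (21/8) * q₀ * t3 + (21/8) * q₀^2 / t3 := by
  have hT3ne : T3 ≠ 0 := by
    intro h
    exact hTne (by rw [← hT3, h]; ring)
  set v : ℂ := Q / T3 with hvdef
  have hQ : Q = T3 * v := by
    rw [hvdef, mul_div_cancel₀ _ hT3ne]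
  have hv3 : v^3 = R - Sq := by
    rw [hvdef, div_pow, hT3, div_eq_iff hTne]
    linear_combination hSq
  have hR : T3^3 + v^3 = 2 * R := by rw [hT3, hv3]; ring
  have hp' : p₀ = P + (1/2)*T3 + (1/2)*v := by rw [hp₀, hvdef]; ring
  have hq' : q₀ = (3/2)*Q + (5/4)*T3^2 + (5/4)*v^2 := by rw [hq₀, hvdef]; ring
  have hr' : r₀ = (11/4)*R + (21/8)*Q*T3 + (21/8)*Q*v := by rw [hr₀, hvdef]; ring
  obtain ⟨g, hg⟩ := IsAlgClosed.exists_pow_nat_eq (-(T3^2 + T3*v + v^2)) (n := 2) (by norm_num)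
  rcases eq_or_ne (g - (T3+v)/2) 0 with h | h
  · refine aux_dual P Q R T3 v (-g) p₀ q₀ r₀ hQ hR (by rw [neg_pow]; simpa using hg) hp' hq' hr' ?_
    intro h2
    have hsum : T3 + v = 0 := by linear_combination -h - h2
    have hgz : g = 0 := by linear_combination (1/2 : ℂ) * (h - h2)
    have hT2 : T3^2 = 0 := by linear_combination hg - g * hgz - v * hsum
    exact hT3ne (by simpa using sq_eq_zero_iff.mp hT2)
  · exact aux_dual P Q R T3 v g p₀ q₀ r₀ hQ hR hg hp' hq' hr' h
end

section
/- If (p, q, r) are smooth functions satisfying p' = (1/6)(p²−q), q' = (2/3)(pq−r), r' = pr + (k²/(36−k²))q² for a parameter k with k² ≠ 36, then y = p satisfies the generalised Chazy equation y''' − 2yy'' + 3(y')² − (4/(36−k²))(6y' − y²)² = 0. -/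
open Complex

/-- If `(p, q, r)` satisfy the first-order system associated to the generalised
Chazy equation with parameter `k` (with `k² ≠ 36`), then `y = p` satisfies the
generalised Chazy equation
`y''' - 2yy'' + 3(y')² - (4/(36-k²))(6y' - y²)² = 0`. -/
theorem generalised_chazy_of_system (s : Set ℂ) (hs : IsOpen s) (k : ℂ)
    (hk : k^2 ≠ 36) (p q r : ℂ → ℂ)
    (hp : ∀ x ∈ s, HasDerivAt p ((1/6) * ((p x)^2 - q x)) x)
    (hq : ∀ x ∈ s, HasDerivAt q ((2/3) * (p x * q x - r x)) x)
    (hr : ∀ x ∈ s, HasDerivAt r (p x * r x + (k^2 / (36 - k^2)) * (q x)^2) x) :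
    ∀ x ∈ s,
      deriv (deriv (deriv p)) x - 2 * p x * deriv (deriv p) x + 3 * (deriv p x)^2
        - (4 / (36 - k^2)) * (6 * deriv p x - (p x)^2)^2 = 0 := by
  have h36 : (36 : ℂ) - k^2 ≠ 0 := fun h => hk (by linear_combination -h)
  -- first derivative
  have e1 : ∀ y ∈ s, deriv p y = (1/6) * ((p y)^2 - q y) := fun y hy => (hp y hy).deriv
  -- second derivative
  have h2 : ∀ y ∈ s, HasDerivAt (deriv p)
      ((1/18) * (p y)^3 - (1/6) * (p y * q y) + (1/9) * r y) y := by
    intro y hy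
    have hA : HasDerivAt (fun z => (1/6 : ℂ) * ((p z)^2 - q z))
        ((1/18) * (p y)^3 - (1/6) * (p y * q y) + (1/9) * r y) y := by
      have := (((hp y hy).pow 2).sub (hq y hy)).const_mul (1/6 : ℂ)
      refine this.congr_deriv ?_
      norm_num
      ring
    exact hA.congr_of_eventuallyEq (Filter.eventuallyEq_of_mem (hs.mem_nhds hy) e1)
  have e2 : ∀ y ∈ s, deriv (deriv p) y
      = (1/18) * (p y)^3 - (1/6) * (p y * q y) + (1/9) * r y :=
    fun y hy => (h2 y hy).deriv
  intro x hx
  -- third derivative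
  have h3 : HasDerivAt (deriv (deriv p))
      ((1/18) * (3 * (p x)^2 * ((1/6) * ((p x)^2 - q x)))
        - (1/6) * (((1/6) * ((p x)^2 - q x)) * q x + p x * ((2/3) * (p x * q x - r x)))
        + (1/9) * (p x * r x + (k^2 / (36 - k^2)) * (q x)^2)) x := by
    have hA : HasDerivAt (fun z => (1/18 : ℂ) * (p z)^3 - (1/6) * (p z * q z) + (1/9) * r z)
        ((1/18) * (3 * (p x)^2 * ((1/6) * ((p x)^2 - q x)))
          - (1/6) * (((1/6) * ((p x)^2 - q x)) * q x + p x * ((2/3) * (p x * q x - r x)))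
          + (1/9) * (p x * r x + (k^2 / (36 - k^2)) * (q x)^2)) x := by
      have := ((((hp x hx).pow 3).const_mul (1/18 : ℂ)).sub
        (((hp x hx).mul (hq x hx)).const_mul (1/6 : ℂ))).add ((hr x hx).const_mul (1/9 : ℂ))
      refine this.congr_deriv ?_
      norm_num
    exact hA.congr_of_eventuallyEq (Filter.eventuallyEq_of_mem (hs.mem_nhds hx) e2)
  rw [h3.deriv, e2 x hx, e1 x hx]
  field_simp [h36]
  ring_nf
end

section
/- Suppose (p₁, p₂, p₃) satisfy the cyclic system p₁' − (1/6)p₁² = (5/18)(p₂−p₃)², p₂' − (1/6)p₂² = (5/18)(p₃−p₁)², p₃' − (1/6)p₃² = (5/18)(p₁−p₂)². Define q₁ = −(5/3)(p₂−p₃)² and r₁ = −(1/3)q₁(2p₁−p₂−p₃). Then (p₁, q₁, r₁) satisfies p₁' = (1/6)(p₁²−q₁), q₁' = (2/3)(p₁q₁−r₁), r₁' = p₁r₁ + (1/15)q₁², i.e. the first-order system associated to the generalised Chazy equation with k = 3/2. -/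
open Complex

/-- If `(p₁, p₂, p₃)` satisfy the cyclic system
`pᵢ' - (1/6)pᵢ² = (5/18)(p_{i+1} - p_{i+2})²`, then with
`q₁ = -(5/3)(p₂-p₃)²` and `r₁ = -(1/3)q₁(2p₁-p₂-p₃)` the triple `(p₁, q₁, r₁)`
satisfies the first-order system associated to the generalised Chazy equation
with `k = 3/2`. -/
theorem chazy32_system_of_p (s : Set ℂ) (hs : IsOpen s)
    (p₁ p₂ p₃ q₁ r₁ : ℂ → ℂ)
    (h₁ : ∀ x ∈ s, HasDerivAt p₁ ((1/6) * (p₁ x)^2 + (5/18) * (p₂ x - p₃ x)^2) x)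
    (h₂ : ∀ x ∈ s, HasDerivAt p₂ ((1/6) * (p₂ x)^2 + (5/18) * (p₃ x - p₁ x)^2) x)
    (h₃ : ∀ x ∈ s, HasDerivAt p₃ ((1/6) * (p₃ x)^2 + (5/18) * (p₁ x - p₂ x)^2) x)
    (hq₁ : ∀ x, q₁ x = -(5/3) * (p₂ x - p₃ x)^2)
    (hr₁ : ∀ x, r₁ x = -(1/3) * q₁ x * (2 * p₁ x - p₂ x - p₃ x)) :
    ∀ x ∈ s,
      HasDerivAt p₁ ((1/6) * ((p₁ x)^2 - q₁ x)) x ∧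
      HasDerivAt q₁ ((2/3) * (p₁ x * q₁ x - r₁ x)) x ∧
      HasDerivAt r₁ (p₁ x * r₁ x + (1/15) * (q₁ x)^2) x := by
  have hqf : q₁ = fun x => -(5/3) * (p₂ x - p₃ x)^2 := funext hq₁
  have hrf : r₁ = fun x => (5/9) * (p₂ x - p₃ x)^2 * (2 * p₁ x - p₂ x - p₃ x) := by
    funext x; rw [hr₁, hq₁]; ring
  intro x hx
  have H₁ := h₁ x hx
  have H₂ := h₂ x hx
  have H₃ := h₃ x hx
  refine ⟨?_, ?_, ?_⟩
  · convert H₁ using 1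
    rw [hq₁]; ring
  · rw [hqf]
    have h := ((H₂.sub H₃).pow 2).const_mul (-(5/3) : ℂ)
    refine h.congr_deriv ?_
    rw [hr₁, hq₁]; norm_num only [Pi.sub_apply]; push_cast; ring
  · rw [hrf]
    have h := (((H₂.sub H₃).pow 2).const_mul ((5/9) : ℂ)).mul
      (((H₁.const_mul (2 : ℂ)).sub H₂).sub H₃)
    refine h.congr_deriv ?_
    simp only [hq₁]; norm_num only [Pi.sub_apply, Pi.pow_apply]; push_cast; ring
end

section
/- Let (P, Q, R) satisfy P' = (1/6)(P²−Q), Q' = (2/3)(PQ−R), R' = PR + (1/15)Q², with Q nonvanishing. Let Z = 3R/(2Q) + (1/2)√(−3Q/5) and Z̄ = 3R/(2Q) − (1/2)√(−3Q/5) (for a holomorphic branch of the square root). Then the triple (P + Z, −(5/3)Z̄², (5/9)Z̄²(2Z − Z̄)) also satisfies the same system P' = (1/6)(P²−Q), Q' = (2/3)(PQ−R), R' = PR + (1/15)Q². -/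
open Complex

set_option maxHeartbeats 800000

/-- Given `(P, Q, R)` satisfying the first-order system associated to the
generalised Chazy equation with `k = 3/2` and `Q` nonvanishing, with
`Z = 3R/(2Q) + (1/2)W` and `Z̄ = 3R/(2Q) - (1/2)W` for a holomorphic square
root `W` of `-3Q/5`, the triple `(P + Z, -(5/3)Z̄², (5/9)Z̄²(2Z - Z̄))` also
satisfies the same system. -/
theorem chazy32_automorphism (s : Set ℂ) (hs : IsOpen s)
    (P Q R W Z Zb p₂ q₂ r₂ : ℂ → ℂ)
    (hP : ∀ x ∈ s, HasDerivAt P ((1/6) * ((P x)^2 - Q x)) x)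
    (hQ : ∀ x ∈ s, HasDerivAt Q ((2/3) * (P x * Q x - R x)) x)
    (hR : ∀ x ∈ s, HasDerivAt R (P x * R x + (1/15) * (Q x)^2) x)
    (hQne : ∀ x ∈ s, Q x ≠ 0)
    (hW : DifferentiableOn ℂ W s)
    (hW2 : ∀ x ∈ s, (W x)^2 = -(3/5) * Q x)
    (hZ : ∀ x, Z x = 3 * R x / (2 * Q x) + (1/2) * W x)
    (hZb : ∀ x, Zb x = 3 * R x / (2 * Q x) - (1/2) * W x)
    (hp₂ : ∀ x, p₂ x = P x + Z x)
    (hq₂ : ∀ x, q₂ x = -(5/3) * (Zb x)^2)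
    (hr₂ : ∀ x, r₂ x = (5/9) * (Zb x)^2 * (2 * Z x - Zb x)) :
    ∀ x ∈ s,
      HasDerivAt p₂ ((1/6) * ((p₂ x)^2 - q₂ x)) x ∧
      HasDerivAt q₂ ((2/3) * (p₂ x * q₂ x - r₂ x)) x ∧
      HasDerivAt r₂ (p₂ x * r₂ x + (1/15) * (q₂ x)^2) x := by
  intro x hx
  have hmem : s ∈ nhds x := hs.mem_nhds hx
  have hq := hQne x hx
  have hQx : Q x = -(5/3) * (W x)^2 := by
    have h := hW2 x hx; linear_combination ((5:ℂ)/3) * h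
  have hw : W x ≠ 0 := by
    have h2 : (W x)^2 ≠ 0 := by
      rw [hW2 x hx]; exact mul_ne_zero (by norm_num) hq
    exact fun h => h2 (by rw [h]; ring)
  have h2w : (2 : ℂ) * W x ≠ 0 := mul_ne_zero two_ne_zero hw
  have h2Q : (2 : ℂ) * Q x ≠ 0 := mul_ne_zero two_ne_zero hq
  have hdW : HasDerivAt W (deriv W x) x :=
    (hW.differentiableAt hmem).hasDerivAt
  set dW := deriv W x with hdWdef
  have hsq : HasDerivAt (fun y => (W y)^2) (2 * W x * dW) x := by
    have h := hdW.fun_pow 2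
    refine h.congr_deriv ?_
    push_cast; ring
  have hsq' : HasDerivAt (fun y => (W y)^2)
      (-(3/5) * ((2/3) * (P x * Q x - R x))) x := by
    have h1 : HasDerivAt (fun y => -(3/5) * Q y)
        (-(3/5) * ((2/3) * (P x * Q x - R x))) x :=
      (hQ x hx).const_mul (-(3/5))
    refine h1.congr_of_eventuallyEq ?_
    filter_upwards [hmem] with y hy using hW2 y hy
  have hdWval : 2 * W x * dW = -(3/5) * ((2/3) * (P x * Q x - R x)) :=
    hsq.unique hsq'
  obtain ⟨V, hVeq⟩ : ∃ V, 3 * R x / (2 * Q x) = V := ⟨_, rfl⟩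
  have hR3 : 3 * R x = V * (2 * Q x) := (div_eq_iff h2Q).mp hVeq
  have hR2 : R x = (1/3) * (V * (2 * Q x)) := by
    linear_combination ((1:ℂ)/3) * hR3
  -- derivative of W in polynomial form
  have hdWv : dW = (1/3) * P x * W x - (2/9) * V * W x := by
    refine mul_left_cancel₀ h2w ?_
    rw [hdWval, hR2, hQx]
    ring
  set Rd := P x * R x + (1/15) * (Q x)^2 with hRd
  set Qd := (2/3) * (P x * Q x - R x) with hQd
  set Fd := (3 * Rd * (2 * Q x) - 3 * R x * (2 * Qd)) / (2 * Q x)^2 with hFd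
  have hF : HasDerivAt (fun y => 3 * R y / (2 * Q y)) Fd x :=
    ((hR x hx).const_mul 3).div ((hQ x hx).const_mul 2) h2Q
  -- Fd in polynomial form
  have hFdv : Fd = (1/3) * P x * V + (4/9) * V^2 - (1/6) * (W x)^2 := by
    refine mul_right_cancel₀ (pow_ne_zero 2 h2Q) ?_
    rw [hFd, div_mul_cancel₀ _ (pow_ne_zero 2 h2Q), hRd, hQd, hR2, hQx]
    ring
  have hZd : HasDerivAt Z (Fd + (1/2) * dW) x := by
    rw [funext hZ]
    exact hF.add (hdW.const_mul (1/2))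
  have hZbd : HasDerivAt Zb (Fd - (1/2) * dW) x := by
    rw [funext hZb]
    exact hF.sub (hdW.const_mul (1/2))
  refine ⟨?_, ?_, ?_⟩
  · have hp2d : HasDerivAt p₂ ((1/6) * ((P x)^2 - Q x) + (Fd + (1/2) * dW)) x := by
      rw [funext hp₂]
      exact (hP x hx).add hZd
    have e1 : (1/6) * ((p₂ x)^2 - q₂ x)
        = (1/6) * ((P x)^2 - Q x) + (Fd + (1/2) * dW) := by
      rw [hp₂, hq₂, hZ, hZb, hVeq, hFdv, hdWv, hQx]
      ring
    rw [e1]; exact hp2d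
  · have hq2d : HasDerivAt q₂ (-(5/3) * (2 * Zb x * (Fd - (1/2) * dW))) x := by
      rw [funext hq₂]
      have h := HasDerivAt.const_mul (-(5/3) : ℂ) (hZbd.fun_pow 2)
      refine h.congr_deriv ?_
      push_cast; ring
    have e2 : (2/3) * (p₂ x * q₂ x - r₂ x)
        = -(5/3) * (2 * Zb x * (Fd - (1/2) * dW)) := by
      rw [hp₂, hq₂, hr₂, hZ, hZb, hVeq, hFdv, hdWv]
      ring
    rw [e2]; exact hq2d
  · have hc : HasDerivAt (fun y => (5/9) * (Zb y)^2)
        ((5/9) * (2 * Zb x * (Fd - (1/2) * dW))) x := by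
      have h := HasDerivAt.const_mul ((5/9) : ℂ) (hZbd.fun_pow 2)
      refine h.congr_deriv ?_
      push_cast; ring
    have hd : HasDerivAt (fun y => 2 * Z y - Zb y)
        (2 * (Fd + (1/2) * dW) - (Fd - (1/2) * dW)) x :=
      (hZd.const_mul 2).sub hZbd
    have hr2d : HasDerivAt r₂
        ((5/9) * (2 * Zb x * (Fd - (1/2) * dW)) * (2 * Z x - Zb x)
          + (5/9) * (Zb x)^2 * (2 * (Fd + (1/2) * dW) - (Fd - (1/2) * dW))) x := by
      rw [funext hr₂]
      exact hc.mul hd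
    have e3 : p₂ x * r₂ x + (1/15) * (q₂ x)^2
        = (5/9) * (2 * Zb x * (Fd - (1/2) * dW)) * (2 * Z x - Zb x)
          + (5/9) * (Zb x)^2 * (2 * (Fd + (1/2) * dW) - (Fd - (1/2) * dW)) := by
      rw [hp₂, hq₂, hr₂, hZ, hZb, hVeq, hFdv, hdWv]
      ring
    rw [e3]; exact hr2d
end

section
/- Let (P, Q, R) satisfy P' = (1/6)(P²−Q), Q' = (2/3)(PQ−R), R' = PR + (1/15)Q² with Q nonvanishing. Then the triple p₀ = P + R/Q, q₀ = (3/5)Q − 3R²/Q², r₀ = (9/5)R + 3R³/Q³ satisfies p₀' = (1/6)(p₀²−q₀), q₀' = (2/3)(p₀q₀−r₀), r₀' = p₀r₀ + (1/3)q₀², i.e. the first-order system associated to the generalised Chazy equation with parameter k = 3. -/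
set_option maxHeartbeats 1000000


open Complex

/-- Given `(P, Q, R)` satisfying the first-order system associated to the
generalised Chazy equation with `k = 3/2` and `Q` nonvanishing, the triple
`p₀ = P + R/Q`, `q₀ = (3/5)Q - 3R²/Q²`, `r₀ = (9/5)R + 3R³/Q³` satisfies the
first-order system associated to the generalised Chazy equation with `k = 3`. -/
theorem chazy32_to_chazy3 (s : Set ℂ) (hs : IsOpen s)
    (P Q R p₀ q₀ r₀ : ℂ → ℂ)
    (hP : ∀ x ∈ s, HasDerivAt P ((1/6) * ((P x)^2 - Q x)) x)
    (hQ : ∀ x ∈ s, HasDerivAt Q ((2/3) * (P x * Q x - R x)) x)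
    (hR : ∀ x ∈ s, HasDerivAt R (P x * R x + (1/15) * (Q x)^2) x)
    (hQne : ∀ x ∈ s, Q x ≠ 0)
    (hp₀ : ∀ x, p₀ x = P x + R x / Q x)
    (hq₀ : ∀ x, q₀ x = (3/5) * Q x - 3 * (R x)^2 / (Q x)^2)
    (hr₀ : ∀ x, r₀ x = (9/5) * R x + 3 * (R x)^3 / (Q x)^3) :
    ∀ x ∈ s,
      HasDerivAt p₀ ((1/6) * ((p₀ x)^2 - q₀ x)) x ∧
      HasDerivAt q₀ ((2/3) * (p₀ x * q₀ x - r₀ x)) x ∧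
      HasDerivAt r₀ (p₀ x * r₀ x + (1/3) * (q₀ x)^2) x := by
  obtain rfl : p₀ = fun y => P y + R y / Q y := funext hp₀
  obtain rfl : q₀ = fun y => (3/5) * Q y - 3 * (R y)^2 / (Q y)^2 := funext hq₀
  obtain rfl : r₀ = fun y => (9/5) * R y + 3 * (R y)^3 / (Q y)^3 := funext hr₀
  intro x hx
  have hPx := hP x hx
  have hQx := hQ x hx
  have hRx := hR x hx
  have hq := hQne x hx
  refine ⟨?_, ?_, ?_⟩
  · have h := hPx.add (hRx.div hQx hq)
    convert h using 1
    · rfl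
    · rfl
    · rfl
    field_simp [hq]
    ring
  · have h := (hQx.const_mul ((3:ℂ)/5)).sub
      (((hRx.pow 2).const_mul (3:ℂ)).div (hQx.pow 2) (pow_ne_zero 2 hq))
    norm_num at h
    convert h using 1
    · rfl
    · rfl
    · rfl
    field_simp [hq]
    ring
  · have h := (hRx.const_mul ((9:ℂ)/5)).add
      (((hRx.pow 3).const_mul (3:ℂ)).div (hQx.pow 3) (pow_ne_zero 3 hq))
    convert h using 1
    · rfl
    · rfl
    · rfl
    simp only [Pi.pow_apply]
    field_simp [hq]
    ring
end

section
/- Let q₀, r₀ be complex numbers and let z be a root of the cubic 16z³ − 24q₀z² + 9q₀²z − q₀³ − 3r₀² = 0 with 4z ≠ q₀. Define P = p₀ − r₀/(4z − q₀), Q = (5/3)z, R = (5/3)·r₀z/(4z − q₀). Then P + R/Q = p₀, (3/5)Q − 3R²/Q² = q₀, and (9/5)R + 3R³/Q³ = r₀ (assuming Q ≠ 0). -/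
open Complex

/-- If `z` is a root of `16z³ - 24q₀z² + 9q₀²z - q₀³ - 3r₀² = 0` with
`4z ≠ q₀` and `z ≠ 0`, then `P = p₀ - r₀/(4z - q₀)`, `Q = (5/3)z`,
`R = (5/3) r₀ z/(4z - q₀)` satisfy `P + R/Q = p₀`, `(3/5)Q - 3R²/Q² = q₀`,
and `(9/5)R + 3R³/Q³ = r₀`. -/
theorem chazy3_to_chazy32_inverse (p₀ q₀ r₀ z P Q R : ℂ)
    (hz : 16 * z^3 - 24 * q₀ * z^2 + 9 * q₀^2 * z - q₀^3 - 3 * r₀^2 = 0)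
    (hne : 4 * z - q₀ ≠ 0) (hz0 : z ≠ 0)
    (hP : P = p₀ - r₀ / (4 * z - q₀))
    (hQ : Q = (5/3) * z)
    (hR : R = (5/3) * (r₀ * z / (4 * z - q₀))) :
    P + R / Q = p₀ ∧ (3/5) * Q - 3 * R^2 / Q^2 = q₀ ∧
      (9/5) * R + 3 * R^3 / Q^3 = r₀ := by
  subst hP hQ hR
  refine ⟨by field_simp; ring, ?_, ?_⟩
  · field_simp [show z * 4 - q₀ ≠ 0 by rwa [mul_comm]]
    linear_combination hz
  · field_simp [show z * 4 - q₀ ≠ 0 by rwa [mul_comm]]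
    linear_combination (-3 * r₀) * hz
end
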